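/- For all integers n ≥ 2 and k ≥ 1, there exists a k-coloring of the edges of the complete graph K_{(n−1)k + n} that contains no rainbow triangle and no monochromatic copy of the even cycle C_{2n}; consequently gr_k(K_3 : C_{2n}) ≥ (n − 1)k + n + 1. -/

import Mathlib

open SimpleGraph

/-- The edge coloring `c` of the complete graph on `V` contains a rainbow triangle. -/
def HasRainbowTriangle {V α : Type*} (c : Sym2 V → α) : Prop :=
  ∃ x y z : V, x ≠ y ∧ x ≠ z ∧ y ≠ z ∧
    c s(x, y) ≠ c s(x, z) ∧ c s(x, y) ≠ c s(y, z) ∧ c s(x, z) ≠ c s(y, z)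

/-- The edge coloring `c` contains a copy of `H` all of whose edges have color `i`. -/
def HasMonoCopyIn {V W α : Type*} (c : Sym2 V → α) (H : SimpleGraph W) (i : α) : Prop :=
  ∃ f : W ↪ V, ∀ u v, H.Adj u v → c s(f u, f v) = i

/-- The edge coloring `c` contains a monochromatic copy of `H`. -/
def HasMonoCopy {V W α : Type*} (c : Sym2 V → α) (H : SimpleGraph W) : Prop :=
  ∃ i, HasMonoCopyIn c H i

/-- Every `k`-coloring of the edges of `K_n` contains a rainbow triangle or a
monochromatic copy of `H`. -/
def grProp {W : Type*} (k : ℕ) (H : SimpleGraph W) (n : ℕ) : Prop :=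
  ∀ c : Sym2 (Fin n) → Fin k, HasRainbowTriangle c ∨ HasMonoCopy c H

/-- The `k`-color Gallai–Ramsey number `gr_k(K₃ : H)`: the minimum `N` such that for all
`n ≥ N`, every `k`-coloring of the edges of `K_n` contains a rainbow triangle or a
monochromatic copy of `H`. -/
noncomputable def gr {W : Type*} (k : ℕ) (H : SimpleGraph W) : ℕ :=
  sInf {N | ∀ n, N ≤ n → grProp k H n}


def ramB (k : ℕ) : ℕ → ℕ
  | 0 => 1
  | t + 1 => k * ramB k t + 1


lemma seq_lemma {V : Type*} [DecidableEq V] {k : ℕ} (hk : 1 ≤ k) (c : V → V → Fin k) :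
    ∀ (t : ℕ) (A : Finset V), ramB k t ≤ A.card →
    ∃ (v : ℕ → V) (col : ℕ → Fin k),
      (∀ i, i < t → v i ∈ A) ∧
      ∀ i j, i < j → j < t → v i ≠ v j ∧ c (v i) (v j) = col i := by
  intro t
  induction t with
  | zero =>
    intro A hA
    obtain ⟨a, ha⟩ := Finset.card_pos.mp (by simpa [ramB] using hA)
    exact ⟨fun _ => a, fun _ => ⟨0, hk⟩, fun i hi => by omega, fun i j hij hj => by omega⟩
  | succ t ih =>
    intro A hA
    rw [ramB] at hA
    have hA0 : 0 < A.card := by omega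
    obtain ⟨a, ha⟩ := Finset.card_pos.mp hA0
    have hB : k * ramB k t ≤ (A.erase a).card := by
      rw [Finset.card_erase_of_mem ha]; omega
    obtain ⟨i0, _, hfib⟩ :=
      Finset.exists_le_card_fiber_of_mul_le_card_of_maps_to
        (f := fun b => c a b) (t := (Finset.univ : Finset (Fin k)))
        (fun b _ => Finset.mem_univ _) ⟨⟨0, hk⟩, Finset.mem_univ _⟩
        (by simpa using hB)
    obtain ⟨v', col', hmem', hpair'⟩ := ih _ hfib
    refine ⟨fun i => if i = 0 then a else v' (i - 1),
      fun i => if i = 0 then i0 else col' (i - 1), ?_, ?_⟩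
    · intro i hi
      by_cases h0 : i = 0
      · simp [h0, ha]
      · simp only [h0, if_false]
        have := hmem' (i - 1) (by omega)
        exact Finset.mem_of_mem_erase (Finset.mem_of_mem_filter _ this)
    · intro i j hij hj
      have hj0 : j ≠ 0 := by omega
      have hjm := hmem' (j - 1) (by omega)
      rw [Finset.mem_filter] at hjm
      by_cases h0 : i = 0
      · simp only [h0, if_true, hj0, if_false]
        constructor
        · exact fun h => (Finset.ne_of_mem_erase hjm.1) h.symm
        · exact hjm.2
      · simp only [h0, if_false, hj0, if_false]
        exact hpair' (i - 1) (j - 1) (by omega) (by omega)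

lemma mono_copy_of_big {w k m : ℕ} (hk : 1 ≤ k) (hm : ramB k (k * w) ≤ m)
    (H : SimpleGraph (Fin w)) (c : Sym2 (Fin m) → Fin k) : HasMonoCopy c H := by
  classical
  obtain ⟨v, col, hmem, hpair⟩ :=
    seq_lemma hk (fun a b => c s(a, b)) (k * w) (Finset.univ : Finset (Fin m))
      (by simpa using hm)
  obtain ⟨i0, _, hfib⟩ :=
    Finset.exists_le_card_fiber_of_mul_le_card_of_maps_to
      (s := Finset.range (k * w)) (f := col) (n := w) (t := (Finset.univ : Finset (Fin k)))
      (fun b _ => Finset.mem_univ _) ⟨⟨0, hk⟩, Finset.mem_univ _⟩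
      (by simp)
  set F := {x ∈ Finset.range (k * w) | col x = i0} with hF
  have hcard : w ≤ F.card := hfib
  let e := F.orderEmbOfCardLe hcard
  have heF : ∀ a, e a ∈ F := fun a => F.orderEmbOfCardLe_mem hcard a
  have key : ∀ a b : Fin w, a ≠ b →
      v (e a) ≠ v (e b) ∧ c s(v (e a), v (e b)) = i0 := by
    intro a b hab
    have hFa := heF a
    have hFb := heF b
    rw [hF, Finset.mem_filter, Finset.mem_range] at hFa hFb
    rcases lt_or_gt_of_ne hab with h | h
    · have he : e a < e b := e.strictMono h
      have := hpair (e a) (e b) he hFb.1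
      exact ⟨this.1, this.2.trans hFa.2⟩
    · have he : e b < e a := e.strictMono h
      have := hpair (e b) (e a) he hFa.1
      refine ⟨fun hc' => this.1 hc'.symm, ?_⟩
      rw [Sym2.eq_swap]
      exact this.2.trans hFb.2
  refine ⟨i0, ⟨fun a => v (e a), ?_⟩, ?_⟩
  · intro a b hab
    by_contra hne
    exact (key a b hne).1 hab
  · intro u w' hadj
    exact (key u w' hadj.ne).2


def layerFn (n v : ℕ) : ℕ := if v < 2 * n - 1 then 0 else (v - (2 * n - 1)) / (n - 1) + 1

lemma coloring_exists (n k : ℕ) (hn : 2 ≤ n) (hk : 1 ≤ k) :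
    ∃ c : Sym2 (Fin ((n - 1) * k + n)) → Fin k,
      (∀ u v : Fin ((n - 1) * k + n),
        (c s(u, v)).val = max (layerFn n u.val) (layerFn n v.val)) := by
  have hL : ∀ v : Fin ((n - 1) * k + n), layerFn n v.val ≤ k - 1 := by
    intro v
    unfold layerFn
    split
    · omega
    · rename_i h
      have hv := v.isLt
      have hexp : (n - 1) * (k - 1) + (n - 1) = (n - 1) * k := by
        rw [← Nat.mul_succ]
        congr 1
        omega
      have hcomm : (n - 1) * (k - 1) = (k - 1) * (n - 1) := Nat.mul_comm _ _
      have hlt : v.val - (2 * n - 1) < (k - 1) * (n - 1) := by omega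
      have := (Nat.div_lt_iff_lt_mul (by omega : 0 < n - 1)).mpr hlt
      omega
  refine ⟨Sym2.lift ⟨fun u v => ⟨max (layerFn n u.val) (layerFn n v.val),
      by have := hL u; have := hL v; omega⟩, fun u v => Fin.ext (Nat.max_comm _ _)⟩,
    fun u v => by simp [Sym2.lift_mk]⟩

lemma no_rainbow {n k N : ℕ} (c : Sym2 (Fin N) → Fin k)
    (hc : ∀ u v : Fin N, (c s(u, v)).val = max (layerFn n u.val) (layerFn n v.val)) :
    ¬ HasRainbowTriangle c := by
  rintro ⟨x, y, z, _, _, _, h1, h2, h3⟩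
  rw [Ne, Fin.ext_iff] at h1 h2 h3
  rw [hc, hc] at h1 h2 h3
  omega



lemma no_mono {n k : ℕ} (hn : 2 ≤ n) (hk : 1 ≤ k)
    (c : Sym2 (Fin ((n - 1) * k + n)) → Fin k)
    (hc : ∀ u v : Fin ((n - 1) * k + n),
      (c s(u, v)).val = max (layerFn n u.val) (layerFn n v.val)) :
    ¬ HasMonoCopy c (cycleGraph (2 * n)) := by
  classical
  have h2n : 1 < 2 * n := by omega
  haveI : NeZero (2 * n) := ⟨by omega⟩
  have hone : (1 : Fin (2 * n)).val = 1 := by rw [Fin.val_one']; exact Nat.mod_eq_of_lt h2n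
  have hadj : ∀ v : Fin (2 * n), (cycleGraph (2 * n)).Adj v (v + 1) := by
    intro v
    rw [cycleGraph_adj']
    right
    have h : v + 1 - v = 1 := add_sub_cancel_left v 1
    rw [h, hone]
  rintro ⟨i, f, hf⟩
  have key : ∀ v : Fin (2 * n),
      max (layerFn n (f v).val) (layerFn n (f (v + 1)).val) = i.val := by
    intro v
    have h := hf v (v + 1) (hadj v)
    rw [← hc (f v) (f (v + 1)), h]
  rcases Nat.eq_zero_or_pos i.val with hi0 | hip
  · -- color 0 : all vertices in the first block of size 2n-1
    have hsm : ∀ v : Fin (2 * n), (f v).val < 2 * n - 1 := by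
      intro v
      have h1 := key v
      have h2 : layerFn n (f v).val = 0 := by omega
      by_contra hge
      unfold layerFn at h2
      rw [if_neg hge] at h2
      exact absurd h2 (Nat.succ_ne_zero _)
    have hinj : Function.Injective
        (fun v : Fin (2 * n) => (⟨(f v).val, hsm v⟩ : Fin (2 * n - 1))) := by
      intro a b hab
      apply f.injective
      apply Fin.ext
      simpa [Fin.ext_iff] using hab
    have hcard := Fintype.card_le_of_injective _ hinj
    simp only [Fintype.card_fin] at hcard
    omega
  · set b := i.val with hb
    have hcov : ∀ v : Fin (2 * n),
        layerFn n (f v).val = b ∨ layerFn n (f (v + 1)).val = b := by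
      intro v; have := key v; omega
    set T : Finset (Fin (2 * n)) :=
      Finset.univ.filter (fun v => layerFn n (f v).val = b) with hT
    have hglt : ∀ j : Fin n, 2 * j.val < 2 * n ∧ 2 * j.val + 1 < 2 * n := by
      intro j; have := j.isLt; omega
    set g : Fin n → Fin (2 * n) := fun j =>
      if layerFn n (f ⟨2 * j.val, (hglt j).1⟩).val = b then ⟨2 * j.val, (hglt j).1⟩
      else ⟨2 * j.val + 1, (hglt j).2⟩ with hg
    have hsucc : ∀ j : Fin n,
        (⟨2 * j.val, (hglt j).1⟩ : Fin (2 * n)) + 1 = ⟨2 * j.val + 1, (hglt j).2⟩ := by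
      intro j
      apply Fin.ext
      rw [Fin.add_def, hone]
      exact Nat.mod_eq_of_lt (hglt j).2
    have hgT : ∀ j, g j ∈ T := by
      intro j
      rw [hT, Finset.mem_filter]
      refine ⟨Finset.mem_univ _, ?_⟩
      rw [hg]
      dsimp only
      split
      · rename_i h; exact h
      · rename_i h
        rcases hcov ⟨2 * j.val, (hglt j).1⟩ with h' | h'
        · exact absurd h' h
        · rw [hsucc j] at h'; exact h'
    have hgval : ∀ j : Fin n, (g j).val = 2 * j.val ∨ (g j).val = 2 * j.val + 1 := by
      intro j
      rw [hg]
      dsimp only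
      split
      · left; rfl
      · right; rfl
    have hginj : Function.Injective g := by
      intro a b' hab
      have h1 := hgval a
      have h2 := hgval b'
      have h3 : (g a).val = (g b').val := by rw [hab]
      apply Fin.ext
      omega
    have hlow : n ≤ T.card := by
      calc n = (Finset.univ : Finset (Fin n)).card := by simp
        _ ≤ T.card := Finset.card_le_card_of_injOn g (fun j _ => hgT j) hginj.injOn
    have hrange : ∀ v : Fin (2 * n), v ∈ T →
        2 * n - 1 + (b - 1) * (n - 1) ≤ (f v).val ∧
        (f v).val < 2 * n - 1 + (b - 1) * (n - 1) + (n - 1) := by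
      intro v hv
      rw [hT, Finset.mem_filter] at hv
      have hL := hv.2
      unfold layerFn at hL
      by_cases hge : (f v).val < 2 * n - 1
      · rw [if_pos hge] at hL; omega
      · rw [if_neg hge] at hL
        have hq : ((f v).val - (2 * n - 1)) / (n - 1) = b - 1 := by omega
        have hn1 : 0 < n - 1 := by omega
        have hge1 : (b - 1) * (n - 1) ≤ (f v).val - (2 * n - 1) :=
          (Nat.le_div_iff_mul_le hn1).mp (le_of_eq hq.symm)
        have hlt1 : (f v).val - (2 * n - 1) < b * (n - 1) :=
          (Nat.div_lt_iff_lt_mul hn1).mp (by omega)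
        have hexp : b * (n - 1) = (b - 1) * (n - 1) + (n - 1) := by
          nth_rewrite 1 [show b = (b - 1) + 1 by omega]
          ring
        omega
    have hup : T.card ≤ n - 1 := by
      have hcc := Finset.card_le_card_of_injOn
        (f := fun v => (f v).val - (2 * n - 1) - (b - 1) * (n - 1))
        (s := T) (t := Finset.range (n - 1))
        (fun v hv => by dsimp only; rw [Finset.mem_coe, Finset.mem_range]; have := hrange v hv; omega)
        (fun v hv v' hv' heq => by
          have h1 := hrange v hv
          have h2 := hrange v' hv'
          apply f.injective
          apply Fin.ext
          dsimp only at heq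
          omega)
      simpa using hcc
    omega

theorem gallai_ramsey_even_cycles_lower (n k : ℕ) (hn : 2 ≤ n) (hk : 1 ≤ k) :
    (∃ c : Sym2 (Fin ((n - 1) * k + n)) → Fin k,
      ¬ HasRainbowTriangle c ∧ ¬ HasMonoCopy c (cycleGraph (2 * n))) ∧
    (n - 1) * k + n + 1 ≤ gr k (cycleGraph (2 * n)) := by
  obtain ⟨c, hc⟩ := coloring_exists n k hn hk
  have hnr : ¬ HasRainbowTriangle c := no_rainbow c hc
  have hnm : ¬ HasMonoCopy c (cycleGraph (2 * n)) := no_mono hn hk c hc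
  refine ⟨⟨c, hnr, hnm⟩, ?_⟩
  have hne : {N | ∀ m, N ≤ m → grProp k (cycleGraph (2 * n)) m}.Nonempty :=
    ⟨ramB k (k * (2 * n)), fun m hm c' =>
      Or.inr (mono_copy_of_big hk hm (cycleGraph (2 * n)) c')⟩
  refine le_csInf hne ?_
  intro N hN
  by_contra hlt
  push_neg at hlt
  have hgr := hN ((n - 1) * k + n) (by omega) c
  rcases hgr with h | h
  · exact hnr h
  · exact hnm h
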